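/- Bidirectional decomposition lemma: Let P and Q be strings and suppose wed(P_{s:t}, Q) < τ for some substring P_{s:t}. If Q' is a τ-subsequence of Q (i.e., Σ_{q∈Q'} c(q) ≥ τ), then there exist a position j with s ≤ j ≤ t and a position i_q of some element of Q' in Q such that P_j ∈ B(Q_{i_q}) and wed(P_{s:t}, Q) = wed(P_{s:j-1}, Q_{1:i_q-1}) + sub(P_j, Q_{i_q}) + wed(P_{j+1:t}, Q_{i_q+1:|Q|}). -/

import Mathlib

/-- Weighted edit distance over strings on alphabet `α`, with `none` playing the
role of the empty symbol `ε`; `sub a b` is the cost of substituting `a` by `b`,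
`sub none (some b)` the insertion cost and `sub (some a) none` the deletion cost. -/
noncomputable def wed {α : Type*} (sub : Option α → Option α → ℝ) : List α → List α → ℝ
  | [], Q => (Q.map (fun q => sub none (some q))).sum
  | p :: P, [] => sub (some p) none + wed sub P []
  | p :: P, q :: Q =>
      min (min (wed sub P Q + sub (some p) (some q))
               (wed sub P (q :: Q) + sub (some p) none))
          (wed sub (p :: P) Q + sub none (some q))
termination_by P Q => P.length + Q.length
decreasing_by all_goals (simp [List.length]; try omega)

open scoped Classical in
/-- Substitution neighborhood `B(q) = {b ∈ Σ : sub(q,b) ≤ η}`. -/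
noncomputable def subNbhd {α : Type*} [Fintype α] (sub : Option α → Option α → ℝ)
    (η : ℝ) (q : α) : Finset α :=
  Finset.univ.filter (fun b => sub (some q) (some b) ≤ η)

open scoped Classical in
/-- The cost `c(q) = min_{q' ∈ Σ_ε \ B(q)} sub(q,q')`.  The minimum is over a
nonempty finite set since `ε` (i.e. `none`) is never in `B(q)`. -/
noncomputable def subCost {α : Type*} [Fintype α] (sub : Option α → Option α → ℝ)
    (η : ℝ) (q : α) : ℝ :=
  Finset.inf'
    (Finset.univ.filter (fun x : Option α => x ∉ (subNbhd sub η q).image some))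
    ⟨none, by simp⟩ (fun x => sub (some q) x)


section Aux
variable {α : Type*} (sub : Option α → Option α → ℝ)

lemma wed_nil (Q : List α) : wed sub [] Q = (Q.map (fun q => sub none (some q))).sum := by
  rw [wed]

lemma wed_cons_nil (p : α) (P : List α) :
    wed sub (p :: P) [] = sub (some p) none + wed sub P [] := by rw [wed]

lemma wed_cons_cons (p q : α) (P Q : List α) :
    wed sub (p :: P) (q :: Q) =
      min (min (wed sub P Q + sub (some p) (some q))
               (wed sub P (q :: Q) + sub (some p) none))
          (wed sub (p :: P) Q + sub none (some q)) := by rw [wed]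

lemma wed_nonneg (hnn : ∀ a b : Option α, 0 ≤ sub a b) : ∀ R Q : List α, 0 ≤ wed sub R Q
  | [], Q => by
      rw [wed_nil]
      exact List.sum_nonneg (by
        intro x hx
        simp only [List.mem_map] at hx
        obtain ⟨a, -, rfl⟩ := hx
        exact hnn _ _)
  | p :: P, [] => by
      rw [wed_cons_nil]
      exact add_nonneg (hnn _ _) (wed_nonneg hnn P [])
  | p :: P, q :: Q => by
      rw [wed_cons_cons]
      exact le_min (le_min (add_nonneg (wed_nonneg hnn P Q) (hnn _ _))
          (add_nonneg (wed_nonneg hnn P (q :: Q)) (hnn _ _)))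
        (add_nonneg (wed_nonneg hnn (p :: P) Q) (hnn _ _))
termination_by R Q => R.length + Q.length

lemma wed_ins : ∀ (B : List α) (c : α) (D : List α),
    wed sub B (c :: D) ≤ sub none (some c) + wed sub B D
  | [], c, D => by rw [wed_nil, wed_nil]; simp
  | b :: B, c, D => by
      rw [wed_cons_cons]
      exact min_le_right _ _ |>.trans (by linarith [le_refl (wed sub (b :: B) D)])

lemma wed_del : ∀ (p : α) (A C : List α),
    wed sub (p :: A) C ≤ sub (some p) none + wed sub A C
  | p, A, [] => le_of_eq (wed_cons_nil sub p A)
  | p, A, c :: C => by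
      rw [wed_cons_cons]
      exact ((min_le_left _ _).trans (min_le_right _ _)).trans (by linarith [le_refl (0:ℝ)])

lemma wed_append : ∀ (A C B D : List α),
    wed sub (A ++ B) (C ++ D) ≤ wed sub A C + wed sub B D
  | [], [], B, D => by simp [wed_nil (sub := sub) ([] : List α)]
  | [], c :: C, B, D => by
      have h1 := wed_ins sub B c (C ++ D)
      have h2 := wed_append [] C B D
      simp only [List.nil_append] at h2 ⊢
      rw [wed_nil]
      simp only [List.map_cons, List.sum_cons]
      rw [wed_nil (sub := sub) C] at h2
      simp only [List.cons_append]
      linarith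
  | p :: A, [], B, D => by
      have h1 := wed_del sub p (A ++ B) D
      have h2 := wed_append A [] B D
      simp only [List.nil_append] at h2 ⊢
      rw [wed_cons_nil]
      simp only [List.cons_append]
      linarith
  | p :: A, c :: C, B, D => by
      have ih1 := wed_append A C B D
      have ih2 := wed_append A (c :: C) B D
      have ih3 := wed_append (p :: A) C B D
      simp only [List.cons_append] at *
      rw [wed_cons_cons (sub := sub) p c (A ++ B) (C ++ D),
        wed_cons_cons (sub := sub) p c A C]
      rw [← min_add_add_right, ← min_add_add_right]
      exact le_min (le_min ((min_le_left _ _).trans ((min_le_left _ _).trans (by linarith)))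
          ((min_le_left _ _).trans ((min_le_right _ _).trans (by linarith))))
        ((min_le_right _ _).trans (by linarith))
termination_by A C B D => A.length + C.length

lemma wed_le_split (R Q : List α) (j : Fin R.length) (i : Fin Q.length) :
    wed sub R Q ≤ wed sub (R.take j) (Q.take i)
      + sub (some (R.get j)) (some (Q.get i))
      + wed sub (R.drop (j + 1)) (Q.drop (i + 1)) := by
  have hR : R = R.take (j : ℕ) ++ (R.get j :: R.drop ((j : ℕ) + 1)) := by
    conv_lhs => rw [← List.take_append_drop (j : ℕ) R]
    rw [List.drop_eq_getElem_cons j.isLt, List.get_eq_getElem]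
  have hQ : Q = Q.take (i : ℕ) ++ (Q.get i :: Q.drop ((i : ℕ) + 1)) := by
    conv_lhs => rw [← List.take_append_drop (i : ℕ) Q]
    rw [List.drop_eq_getElem_cons i.isLt, List.get_eq_getElem]
  have h1 : wed sub R Q ≤ wed sub (R.take j) (Q.take i)
      + wed sub (R.get j :: R.drop (j + 1)) (Q.get i :: Q.drop (i + 1)) := by
    conv_lhs => rw [hR, hQ]
    exact wed_append sub _ _ _ _
  have h2 : wed sub (R.get j :: R.drop (j + 1)) (Q.get i :: Q.drop (i + 1))
      ≤ wed sub (R.drop (j + 1)) (Q.drop (i + 1)) + sub (some (R.get j)) (some (Q.get i)) := by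
    rw [wed_cons_cons]
    exact (min_le_left _ _).trans (min_le_left _ _)
  linarith

end Aux

section Cost
variable {α : Type*} [Fintype α] (sub : Option α → Option α → ℝ)

lemma subCost_le_none (η : ℝ) (q : α) : subCost sub η q ≤ sub (some q) none := by
  apply Finset.inf'_le
  simp

lemma subCost_le_of_far (η : ℝ) (q b : α) (h : ¬ sub (some q) (some b) ≤ η) :
    subCost sub η q ≤ sub (some q) (some b) := by
  apply Finset.inf'_le
  classical
  refine Finset.mem_filter.mpr ⟨Finset.mem_univ _, fun hm => ?_⟩
  obtain ⟨x, hx, hxe⟩ := Finset.mem_image.mp hm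
  cases hxe
  exact h (Finset.mem_filter.mp hx).2

lemma subCost_nonneg (hnn : ∀ a b : Option α, 0 ≤ sub a b) (η : ℝ) (q : α) :
    0 ≤ subCost sub η q :=
  Finset.le_inf' _ _ (fun b _ => hnn _ _)

lemma sum_subCost_le (hnn : ∀ a b : Option α, 0 ≤ sub a b)
    (hsym : ∀ a b : Option α, sub a b = sub b a) (η : ℝ)
    {Q' Q : List α} (h : Q'.Sublist Q) :
    (Q'.map (subCost sub η)).sum ≤ (Q.map (fun q => sub none (some q))).sum := by
  induction h with
  | slnil => simp
  | cons a h ih =>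
      simp only [List.map_cons, List.sum_cons]
      linarith [hnn none (some a)]
  | cons_cons a h ih =>
      simp only [List.map_cons, List.sum_cons]
      have := subCost_le_none sub η a
      rw [hsym (some a) none] at this
      linarith

end Cost

section Shift
variable {α : Type*} (sub : Option α → Option α → ℝ)

lemma shift_sub (p q : α) (P Q : List α) (j : Fin P.length) (i : Fin Q.length)
    (hw : wed sub (p :: P) (q :: Q) = wed sub P Q + sub (some p) (some q))
    (heq : wed sub P Q = wed sub (P.take j) (Q.take i)
      + sub (some (P.get j)) (some (Q.get i))
      + wed sub (P.drop (j + 1)) (Q.drop (i + 1))) :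
    wed sub (p :: P) (q :: Q) = wed sub (p :: P.take j) (q :: Q.take i)
      + sub (some (P.get j)) (some (Q.get i))
      + wed sub (P.drop (j + 1)) (Q.drop (i + 1)) := by
  have le1 := wed_le_split sub (p :: P) (q :: Q) ⟨j + 1, by simp⟩ ⟨i + 1, by simp⟩
  simp only [List.take_succ_cons, List.drop_succ_cons, List.get_eq_getElem,
    List.getElem_cons_succ] at le1
  have ge1 : wed sub (p :: P.take j) (q :: Q.take i)
      ≤ wed sub (P.take j) (Q.take i) + sub (some p) (some q) := by
    rw [wed_cons_cons]
    exact (min_le_left _ _).trans (min_le_left _ _)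
  simp only [List.get_eq_getElem] at heq ⊢
  linarith

lemma shift_del (p : α) (P C : List α) (j : Fin P.length) (i : Fin C.length)
    (hw : wed sub (p :: P) C = wed sub P C + sub (some p) none)
    (heq : wed sub P C = wed sub (P.take j) (C.take i)
      + sub (some (P.get j)) (some (C.get i))
      + wed sub (P.drop (j + 1)) (C.drop (i + 1))) :
    wed sub (p :: P) C = wed sub (p :: P.take j) (C.take i)
      + sub (some (P.get j)) (some (C.get i))
      + wed sub (P.drop (j + 1)) (C.drop (i + 1)) := by
  have le1 := wed_le_split sub (p :: P) C ⟨j + 1, by simp⟩ i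
  simp only [List.take_succ_cons, List.drop_succ_cons, List.get_eq_getElem,
    List.getElem_cons_succ] at le1
  have ge1 := wed_del sub p (P.take j) (C.take i)
  simp only [List.get_eq_getElem] at heq ⊢
  linarith

lemma shift_ins (q : α) (R Q : List α) (j : Fin R.length) (i : Fin Q.length)
    (hw : wed sub R (q :: Q) = wed sub R Q + sub none (some q))
    (heq : wed sub R Q = wed sub (R.take j) (Q.take i)
      + sub (some (R.get j)) (some (Q.get i))
      + wed sub (R.drop (j + 1)) (Q.drop (i + 1))) :
    wed sub R (q :: Q) = wed sub (R.take j) (q :: Q.take i)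
      + sub (some (R.get j)) (some (Q.get i))
      + wed sub (R.drop (j + 1)) (Q.drop (i + 1)) := by
  have le1 := wed_le_split sub R (q :: Q) j ⟨i + 1, by simp⟩
  simp only [List.take_succ_cons, List.drop_succ_cons, List.get_eq_getElem,
    List.getElem_cons_succ] at le1
  have ge1 := wed_ins sub (R.take j) q (Q.take i)
  simp only [List.get_eq_getElem] at heq ⊢
  linarith

end Shift

theorem wed_key {α : Type*} [Fintype α] (sub : Option α → Option α → ℝ)
    (hnn : ∀ a b : Option α, 0 ≤ sub a b)
    (hsym : ∀ a b : Option α, sub a b = sub b a) (η : ℝ) :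
    ∀ R Q Q' : List α, Q'.Sublist Q →
      (Q'.map (subCost sub η)).sum ≤ wed sub R Q ∨
      ∃ j : Fin R.length, ∃ i : Fin Q.length,
        Q.get i ∈ Q' ∧ R.get j ∈ subNbhd sub η (Q.get i) ∧
        wed sub R Q = wed sub (R.take j) (Q.take i)
          + sub (some (R.get j)) (some (Q.get i))
          + wed sub (R.drop (j + 1)) (Q.drop (i + 1))
  | [], Q, Q', hs => Or.inl (by rw [wed_nil]; exact sum_subCost_le sub hnn hsym η hs)
  | p :: P, [], Q', hs => Or.inl (by
      rw [List.sublist_nil.mp hs]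
      simpa using wed_nonneg sub hnn (p :: P) [])
  | p :: P, q :: Q, Q', hs => by
      have hsplit := wed_cons_cons sub p q P Q
      rcases min_cases
          (min (wed sub P Q + sub (some p) (some q)) (wed sub P (q :: Q) + sub (some p) none))
          (wed sub (p :: P) Q + sub none (some q)) with ⟨h1, -⟩ | ⟨h1, -⟩
      · rw [h1] at hsplit
        rcases min_cases (wed sub P Q + sub (some p) (some q))
            (wed sub P (q :: Q) + sub (some p) none) with ⟨h2, -⟩ | ⟨h2, -⟩
        · rw [h2] at hsplit
          -- scenario A : match p with q
          cases hs with
          | cons _ h =>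
              rcases wed_key sub hnn hsym η P Q Q' h with hL | ⟨j, i, hmem, hB, heq⟩
              · exact Or.inl (by rw [hsplit]; have := hnn (some p) (some q); linarith)
              · refine Or.inr ⟨⟨j + 1, by simp⟩, ⟨i + 1, by simp⟩, ?_, ?_, ?_⟩
                · simpa [List.get_eq_getElem] using hmem
                · simpa [List.get_eq_getElem] using hB
                · have := shift_sub sub p q P Q j i hsplit heq
                  simpa [List.get_eq_getElem, List.take_succ_cons, List.drop_succ_cons]
                    using this
          | @cons_cons Q₁ _ _ h =>
              by_cases hpq : sub (some p) (some q) ≤ η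
              · refine Or.inr ⟨⟨0, by simp⟩, ⟨0, by simp⟩, by simp, ?_, ?_⟩
                · simp only [List.get_eq_getElem, List.getElem_cons_zero]
                  simp only [subNbhd, Finset.mem_filter, Finset.mem_univ, true_and]
                  rw [hsym]; exact hpq
                · simp only [List.get_eq_getElem, List.getElem_cons_zero]
                  rw [hsplit]
                  simp [wed_nil]
                  ring
              · have hfar : ¬ sub (some q) (some p) ≤ η := by rw [hsym]; exact hpq
                have hc := subCost_le_of_far sub η q p hfar
                rw [hsym (some q) (some p)] at hc
                rcases wed_key sub hnn hsym η P Q Q₁ h with hL | ⟨j, i, hmem, hB, heq⟩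
                · refine Or.inl ?_
                  rw [hsplit]
                  simp only [List.map_cons, List.sum_cons]
                  linarith
                · refine Or.inr ⟨⟨j + 1, by simp⟩, ⟨i + 1, by simp⟩, ?_, ?_, ?_⟩
                  · simp only [List.get_eq_getElem, List.getElem_cons_succ]
                    exact List.mem_cons_of_mem q (by simpa [List.get_eq_getElem] using hmem)
                  · simpa [List.get_eq_getElem] using hB
                  · have := shift_sub sub p q P Q j i hsplit heq
                    simpa [List.get_eq_getElem, List.take_succ_cons, List.drop_succ_cons]
                      using this
        · rw [h2] at hsplit
          -- scenario B : delete p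
          rcases wed_key sub hnn hsym η P (q :: Q) Q' hs with hL | ⟨j, i, hmem, hB, heq⟩
          · exact Or.inl (by rw [hsplit]; have := hnn (some p) none; linarith)
          · refine Or.inr ⟨⟨j + 1, by simp⟩, i, hmem, by simpa [List.get_eq_getElem] using hB, ?_⟩
            have := shift_del sub p P (q :: Q) j i hsplit heq
            simpa [List.get_eq_getElem, List.take_succ_cons, List.drop_succ_cons] using this
      · rw [h1] at hsplit
        -- scenario C : insert q
        cases hs with
        | cons _ h =>
            rcases wed_key sub hnn hsym η (p :: P) Q Q' h with hL | ⟨j, i, hmem, hB, heq⟩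
            · exact Or.inl (by rw [hsplit]; have := hnn none (some q); linarith)
            · refine Or.inr ⟨j, ⟨i + 1, by simp⟩, ?_, ?_, ?_⟩
              · simpa [List.get_eq_getElem] using hmem
              · simpa [List.get_eq_getElem] using hB
              · have := shift_ins sub q (p :: P) Q j i hsplit heq
                simpa [List.get_eq_getElem, List.take_succ_cons, List.drop_succ_cons] using this
        | @cons_cons Q₁ _ _ h =>
            have hc := subCost_le_none sub η q
            rw [hsym (some q) none] at hc
            rcases wed_key sub hnn hsym η (p :: P) Q Q₁ h with hL | ⟨j, i, hmem, hB, heq⟩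
            · refine Or.inl ?_
              rw [hsplit]
              simp only [List.map_cons, List.sum_cons]
              linarith
            · refine Or.inr ⟨j, ⟨i + 1, by simp⟩, ?_, ?_, ?_⟩
              · simp only [List.get_eq_getElem, List.getElem_cons_succ]
                exact List.mem_cons_of_mem q (by simpa [List.get_eq_getElem] using hmem)
              · simpa [List.get_eq_getElem] using hB
              · have := shift_ins sub q (p :: P) Q j i hsplit heq
                simpa [List.get_eq_getElem, List.take_succ_cons, List.drop_succ_cons] using this
termination_by R Q _ _ => R.length + Q.length

/-- bidirectional decomposition lemma: if a substring `R = P_{s:t}`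
satisfies `wed(R,Q) < τ` and `Q'` is a `τ`-subsequence of `Q`
(`∑_{q∈Q'} c(q) ≥ τ`), then there are positions `j` in `R` and `i` in `Q` with
`Q_i` an element of `Q'`, such that `R_j ∈ B(Q_i)` and the distance decomposes as
`wed(R,Q) = wed(R_{<j}, Q_{<i}) + sub(R_j, Q_i) + wed(R_{>j}, Q_{>i})`. -/
theorem bidirectional_decomposition {α : Type*} [Fintype α]
    (sub : Option α → Option α → ℝ)
    (hnn : ∀ a b : Option α, 0 ≤ sub a b)
    (hsym : ∀ a b : Option α, sub a b = sub b a)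
    (hzero : ∀ a : Option α, sub a a = 0)
    (η : ℝ) (hη : 0 ≤ η) (τ : ℝ) (hτ : 0 < τ)
    (R Q Q' : List α) (hQ' : Q'.Sublist Q)
    (hcost : τ ≤ (Q'.map (subCost sub η)).sum)
    (hmatch : wed sub R Q < τ) :
    ∃ j : Fin R.length, ∃ i : Fin Q.length,
      Q.get i ∈ Q' ∧
      R.get j ∈ subNbhd sub η (Q.get i) ∧
      wed sub R Q =
        wed sub (R.take j) (Q.take i)
          + sub (some (R.get j)) (some (Q.get i))
          + wed sub (R.drop (j + 1)) (Q.drop (i + 1)) := by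
  rcases wed_key sub hnn hsym η R Q Q' hQ' with h | h
  · linarith
  · exact h
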